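/- There is a universal constant C > 0 such that the following holds. Let f be L-smooth and γ-quasar-convex with respect to a global minimizer x*, let R ≥ ‖x₀ − x*‖, and let ε > 0. If T ≥ C (R²σ²/(γ²ε²) + R²L/(γε)), then SGD run for T iterations with an appropriately chosen constant step size (α = R/(2σ√T) if T > R²L²/σ², and α = 1/(2L) otherwise) satisfies (1/T) ∑_{t=1}^{T} E[f(x_t) − f(x*)] ≤ ε; in particular a uniformly random iterate x̃ among x₁, …, x_T satisfies E[f(x̃) − f(x*)] ≤ ε. -/

import Mathlib

open MeasureTheory Finset
open scoped RealInnerProductSpace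


lemma grad_min_zero {n : ℕ} {f : EuclideanSpace ℝ (Fin n) → ℝ} {g x0 : EuclideanSpace ℝ (Fin n)}
    (hgrad : HasGradientAt f g x0) (hmin : ∀ y, f x0 ≤ f y) : g = 0 := by
  have h : IsLocalMin f x0 := Filter.Eventually.of_forall hmin
  have h2 := h.hasFDerivAt_eq_zero (hasGradientAt_iff_hasFDerivAt.mp hgrad)
  have := congrArg (InnerProductSpace.toDual ℝ (EuclideanSpace ℝ (Fin n))).symm h2
  simpa using this

lemma coord_sq_le {n : ℕ} (x : EuclideanSpace ℝ (Fin n)) (i : Fin n) : (x i)^2 ≤ ‖x‖^2 := by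
  have h := EuclideanSpace.norm_eq x
  have h2 : ‖x‖^2 = ∑ j, ‖x j‖^2 := by
    rw [h, Real.sq_sqrt]; exact Finset.sum_nonneg fun j _ => sq_nonneg _
  rw [h2]
  calc (x i)^2 = ‖x i‖^2 := by rw [Real.norm_eq_abs, sq_abs]
    _ ≤ ∑ j, ‖x j‖^2 := Finset.single_le_sum (f := fun j => ‖x j‖^2) (fun j _ => sq_nonneg _) (Finset.mem_univ i)

lemma descent_lemma {n : ℕ} {f : EuclideanSpace ℝ (Fin n) → ℝ}
    {f' : EuclideanSpace ℝ (Fin n) → EuclideanSpace ℝ (Fin n)} {L : ℝ} (hL : 0 ≤ L)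
    (hgrad : ∀ y, HasGradientAt f (f' y) y)
    (hsmooth : ∀ y z, ‖f' y - f' z‖ ≤ L * ‖y - z‖) (a b : EuclideanSpace ℝ (Fin n)) :
    f b ≤ f a + ⟪f' a, b - a⟫ + L/2 * ‖b - a‖^2 := by
  set v := b - a with hv
  have key : ∀ t : ℝ, HasDerivAt (fun s : ℝ => f (a + s • v)) ⟪f' (a + t • v), v⟫ t := by
    intro t
    have h1 : HasDerivAt (fun s : ℝ => a + s • v) v t := by
      simpa using ((hasDerivAt_id t).smul_const v).const_add a
    have h2 := hasGradientAt_iff_hasFDerivAt.mp (hgrad (a + t • v))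
    have h3 := h2.comp_hasDerivAt t h1
    exact (by simpa [InnerProductSpace.toDual_apply_apply] using h3 :
      HasDerivAt (f ∘ fun s : ℝ => a + s • v) ⟪f' (a + t • v), v⟫ t)
  set φ : ℝ → ℝ := fun t => f (a + t • v) - t * ⟪f' a, v⟫ - L/2 * t^2 * ‖v‖^2 with hφ
  have keyφ : ∀ t : ℝ, HasDerivAt φ (⟪f' (a + t • v), v⟫ - ⟪f' a, v⟫ - L * t * ‖v‖^2) t := by
    intro t
    have h4 : HasDerivAt (fun t : ℝ => t * ⟪f' a, v⟫) ⟪f' a, v⟫ t := by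
      simpa using (hasDerivAt_id t).mul_const (⟪f' a, v⟫)
    have h5 : HasDerivAt (fun t : ℝ => L/2 * t^2 * ‖v‖^2) (L * t * ‖v‖^2) t := by
      have := ((hasDerivAt_pow 2 t).const_mul (L/2)).mul_const (‖v‖^2)
      rw [show L * t * ‖v‖^2 = L / 2 * (((2:ℕ):ℝ) * t ^ (2 - 1)) * ‖v‖ ^ 2 by rw [show (2:ℕ) - 1 = 1 from rfl]; push_cast; ring]
      exact this
    exact ((key t).sub h4).sub h5
  have hmono : AntitoneOn φ (Set.Icc 0 1) := by
    apply antitoneOn_of_deriv_nonpos (convex_Icc 0 1)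
    · exact Continuous.continuousOn
        (Differentiable.continuous (fun t => (keyφ t).differentiableAt))
    · intro t _
      exact (keyφ t).differentiableAt.differentiableWithinAt
    · intro t ht
      rw [(keyφ t).deriv]
      have ht0 : (0:ℝ) ≤ t := le_of_lt (by
        have := interior_Icc (a := (0:ℝ)) (b := 1) ▸ ht
        exact this.1)
      have hb : ⟪f' (a + t • v) - f' a, v⟫ ≤ L * t * ‖v‖^2 := by
        calc ⟪f' (a + t • v) - f' a, v⟫ ≤ ‖f' (a + t • v) - f' a‖ * ‖v‖ :=
              real_inner_le_norm _ _
          _ ≤ (L * ‖(a + t • v) - a‖) * ‖v‖ := by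
              apply mul_le_mul_of_nonneg_right (hsmooth _ _) (norm_nonneg _)
          _ = L * t * ‖v‖^2 := by
              simp [norm_smul, abs_of_nonneg ht0]; ring
      rw [inner_sub_left] at hb
      linarith
  have h01 := hmono (Set.left_mem_Icc.mpr zero_le_one) (Set.right_mem_Icc.mpr zero_le_one) zero_le_one
  have hab : a + (1:ℝ) • v = b := by rw [hv]; rw [one_smul]; abel
  have e0 : φ 0 = f a := by simp [hφ]
  have e1 : φ 1 = f b - ⟪f' a, v⟫ - L/2 * ‖v‖^2 := by
    simp only [hφ, hab, one_pow, one_mul]; ring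
  rw [e1, e0] at h01
  linarith


section Helpers
variable {Ω : Type} [MeasurableSpace Ω] {P : Measure Ω} [IsProbabilityMeasure P] {n : ℕ}
  {A B : Ω → EuclideanSpace ℝ (Fin n)}

lemma aesm_norm_sq (hA : AEStronglyMeasurable A P) :
    AEStronglyMeasurable (fun ω => ‖A ω‖^2) P :=
  (continuous_pow 2).comp_aestronglyMeasurable hA.norm

lemma integrable_inner_of_sq (hA : AEStronglyMeasurable A P)
    (hAsq : Integrable (fun ω => ‖A ω‖^2) P) (hB : AEStronglyMeasurable B P)
    (hBsq : Integrable (fun ω => ‖B ω‖^2) P) :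
    Integrable (fun ω => ⟪A ω, B ω⟫) P := by
  refine Integrable.mono' ((hAsq.add hBsq).div_const 2) (hA.inner hB)
    (Filter.Eventually.of_forall fun ω => ?_)
  have h1 := abs_real_inner_le_norm (A ω) (B ω)
  have h2 := sq_nonneg (‖A ω‖ - ‖B ω‖)
  simp only [Pi.add_apply]
  rw [Real.norm_eq_abs]
  nlinarith [norm_nonneg (A ω), norm_nonneg (B ω)]

lemma integrable_norm_sq_sub (hA : AEStronglyMeasurable A P)
    (hAsq : Integrable (fun ω => ‖A ω‖^2) P) (hB : AEStronglyMeasurable B P)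
    (hBsq : Integrable (fun ω => ‖B ω‖^2) P) :
    Integrable (fun ω => ‖A ω - B ω‖^2) P := by
  refine Integrable.mono' ((hAsq.const_mul 2).add (hBsq.const_mul 2))
    (aesm_norm_sq (hA.sub hB)) (Filter.Eventually.of_forall fun ω => ?_)
  have h1 := norm_sub_le (A ω) (B ω)
  have h2 := sq_nonneg (‖A ω‖ - ‖B ω‖)
  simp only [Pi.add_apply]
  rw [Real.norm_eq_abs, abs_of_nonneg (sq_nonneg _)]
  nlinarith [norm_nonneg (A ω - B ω), norm_nonneg (A ω), norm_nonneg (B ω)]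

lemma integrable_norm_of_sq (hA : AEStronglyMeasurable A P)
    (hAsq : Integrable (fun ω => ‖A ω‖^2) P) :
    Integrable (fun ω => ‖A ω‖) P := by
  refine Integrable.mono' (((integrable_const (1:ℝ)).add hAsq).div_const 2) hA.norm
    (Filter.Eventually.of_forall fun ω => ?_)
  simp only [Pi.add_apply]
  rw [Real.norm_eq_abs, abs_of_nonneg (norm_nonneg _)]
  nlinarith [sq_nonneg (‖A ω‖ - 1), norm_nonneg (A ω)]

end Helpers

lemma integrable_coord_mul {Ω : Type} [MeasurableSpace Ω] {P : Measure Ω} {n : ℕ}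
    {A B : Ω → EuclideanSpace ℝ (Fin n)}
    (hA : AEStronglyMeasurable A P) (hAsq : Integrable (fun ω => ‖A ω‖^2) P)
    (hB : AEStronglyMeasurable B P) (hBsq : Integrable (fun ω => ‖B ω‖^2) P) (i : Fin n) :
    Integrable (fun ω => A ω i * B ω i) P := by
  have hAi : AEStronglyMeasurable (fun ω => A ω i) P :=
    (EuclideanSpace.proj i).continuous.comp_aestronglyMeasurable hA
  have hBi : AEStronglyMeasurable (fun ω => B ω i) P :=
    (EuclideanSpace.proj i).continuous.comp_aestronglyMeasurable hB
  refine Integrable.mono' ((hAsq.add hBsq).div_const 2) (hAi.mul hBi)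
    (Filter.Eventually.of_forall fun ω => ?_)
  have h1 := coord_sq_le (A ω) i
  have h2 := coord_sq_le (B ω) i
  have : ‖A ω i * B ω i‖ = |A ω i| * |B ω i| := by rw [Real.norm_eq_abs, abs_mul]
  rw [this]
  have h3 : |A ω i| * |B ω i| ≤ ((A ω i)^2 + (B ω i)^2)/2 := by
    nlinarith [sq_nonneg (|A ω i| - |B ω i|), sq_abs (A ω i), sq_abs (B ω i)]
  calc |A ω i| * |B ω i| ≤ ((A ω i)^2 + (B ω i)^2)/2 := h3
    _ ≤ (‖A ω‖^2 + ‖B ω‖^2)/2 := by linarith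

lemma condexp_coord {Ω : Type} {m : MeasurableSpace Ω} [m0 : MeasurableSpace Ω]
    (P : Measure Ω) [IsProbabilityMeasure P] {n : ℕ} (hm : m ≤ m0)
    (G : Ω → EuclideanSpace ℝ (Fin n)) (hG : Integrable G P) (i : Fin n) :
    (fun ω => (MeasureTheory.condExp m P G) ω i) =ᵐ[P]
      MeasureTheory.condExp m P (fun ω => G ω i) := by
  haveI : IsFiniteMeasure (P.trim hm) := isFiniteMeasure_trim hm
  set pr : EuclideanSpace ℝ (Fin n) →L[ℝ] ℝ := EuclideanSpace.proj i with hpr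
  have hGi : Integrable (fun ω => G ω i) P := by
    simpa [hpr] using pr.integrable_comp hG
  refine ae_eq_condExp_of_forall_setIntegral_eq hm hGi ?_ ?_ ?_
  · intro s _ _
    exact (pr.integrable_comp integrable_condExp).integrableOn
  · intro s hs _
    have h1 : ∫ ω in s, (MeasureTheory.condExp m P G ω) i ∂P
        = pr (∫ ω in s, MeasureTheory.condExp m P G ω ∂P) := by
      simpa [hpr] using pr.integral_comp_comm integrable_condExp.integrableOn
    have h2 : ∫ ω in s, G ω i ∂P = pr (∫ ω in s, G ω ∂P) := by
      simpa [hpr] using pr.integral_comp_comm hG.integrableOn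
    rw [h1, h2, setIntegral_condExp hm hG hs]
  · exact StronglyMeasurable.aestronglyMeasurable
      (pr.continuous.comp_stronglyMeasurable stronglyMeasurable_condExp)

lemma ortho_lemma {Ω : Type} {m : MeasurableSpace Ω} [m0 : MeasurableSpace Ω]
    (P : Measure Ω) [IsProbabilityMeasure P] {n : ℕ} (hm : m ≤ m0)
    (Y G H : Ω → EuclideanSpace ℝ (Fin n))
    (hY : StronglyMeasurable[m] Y) (hYsq : Integrable (fun ω => ‖Y ω‖^2) P)
    (hG : Integrable G P) (hGsq : Integrable (fun ω => ‖G ω‖^2) P)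
    (hHmeas : AEStronglyMeasurable H P) (hHsq : Integrable (fun ω => ‖H ω‖^2) P)
    (hcond : MeasureTheory.condExp m P G =ᵐ[P] H) :
    ∫ ω, ⟪Y ω, G ω⟫ ∂P = ∫ ω, ⟪Y ω, H ω⟫ ∂P := by
  haveI : IsFiniteMeasure (P.trim hm) := isFiniteMeasure_trim hm
  have hYm : AEStronglyMeasurable Y P := (hY.mono hm).aestronglyMeasurable
  have hGm : AEStronglyMeasurable G P := hG.aestronglyMeasurable
  have expand : ∀ (A B : Ω → EuclideanSpace ℝ (Fin n)) (ω : Ω),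
      ⟪A ω, B ω⟫ = ∑ i, A ω i * B ω i := by
    intro A B ω
    simp [PiLp.inner_apply, RCLike.inner_apply, conj_trivial, mul_comm]
  have key : ∀ i : Fin n, ∫ ω, Y ω i * G ω i ∂P = ∫ ω, Y ω i * H ω i ∂P := by
    intro i
    have hYi : StronglyMeasurable[m] (fun ω => Y ω i) :=
      (EuclideanSpace.proj i).continuous.comp_stronglyMeasurable hY
    have hGi : Integrable (fun ω => G ω i) P := by
      simpa using (EuclideanSpace.proj i : EuclideanSpace ℝ (Fin n) →L[ℝ] ℝ).integrable_comp hG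
    have hYGi : Integrable (fun ω => Y ω i * G ω i) P :=
      integrable_coord_mul hYm hYsq hGm hGsq i
    have h1 : ∫ ω, (MeasureTheory.condExp m P (fun ω' => Y ω' i * G ω' i)) ω ∂P
        = ∫ ω, Y ω i * G ω i ∂P := integral_condExp hm
    have h2 : MeasureTheory.condExp m P (fun ω' => Y ω' i * G ω' i)
        =ᵐ[P] fun ω => Y ω i * (MeasureTheory.condExp m P (fun ω' => G ω' i)) ω := by
      have := condExp_mul_of_stronglyMeasurable_left (μ := P) hYi
        (by exact hYGi) (by exact hGi)
      exact this
    have h3 : (fun ω => (MeasureTheory.condExp m P (fun ω' => G ω' i)) ω)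
        =ᵐ[P] (fun ω => H ω i) := by
      have hc := (condexp_coord P hm G hG i).symm
      have hc2 : (fun ω => (MeasureTheory.condExp m P G) ω i) =ᵐ[P] fun ω => H ω i :=
        hcond.mono fun ω h => congrArg (fun v => v i) h
      exact hc.trans hc2
    have h4 : MeasureTheory.condExp m P (fun ω' => Y ω' i * G ω' i)
        =ᵐ[P] fun ω => Y ω i * H ω i :=
      h2.trans (h3.mono fun ω h => by simp only [h])
    rw [← h1, integral_congr_ae h4]
  calc ∫ ω, ⟪Y ω, G ω⟫ ∂P = ∫ ω, ∑ i, Y ω i * G ω i ∂P := by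
        simp_rw [expand]
    _ = ∑ i, ∫ ω, Y ω i * G ω i ∂P :=
        integral_finset_sum _ (fun i _ => integrable_coord_mul hYm hYsq hGm hGsq i)
    _ = ∑ i, ∫ ω, Y ω i * H ω i ∂P := by simp_rw [key]
    _ = ∫ ω, ∑ i, Y ω i * H ω i ∂P :=
        (integral_finset_sum _ (fun i _ => integrable_coord_mul hYm hYsq hHmeas hHsq i)).symm
    _ = ∫ ω, ⟪Y ω, H ω⟫ ∂P := by simp_rw [expand]

set_option maxHeartbeats 1000000 in
theorem sgd_master {Ω : Type} [m0 : MeasurableSpace Ω] (P : Measure Ω) [IsProbabilityMeasure P]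
    {n : ℕ} (f : EuclideanSpace ℝ (Fin n) → ℝ)
    (f' : EuclideanSpace ℝ (Fin n) → EuclideanSpace ℝ (Fin n))
    (xstar x₀ : EuclideanSpace ℝ (Fin n))
    (L γ σ α : ℝ) (T : ℕ)
    (x g : ℕ → Ω → EuclideanSpace ℝ (Fin n))
    (hgrad : ∀ y, HasGradientAt f (f' y) y)
    (hmin : ∀ y, f xstar ≤ f y)
    (hγ0 : 0 < γ)
    (hqc : ∀ y, f xstar ≥ f y + (1/γ) * ⟪f' y, xstar - y⟫)
    (hsmooth : ∀ y z, ‖f' y - f' z‖ ≤ L * ‖y - z‖)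
    (hσ : 0 ≤ σ) (hL : 0 < L) (hα : 0 < α) (hLα : L*α ≤ 1/2) (hT1 : 1 ≤ T)
    (hx0 : x 0 = fun _ => x₀)
    (hstep : ∀ t, x (t+1) = fun ω => x t ω - α • g t ω)
    (hgmeas : ∀ t, Measurable (g t))
    (hgint : ∀ t, Integrable (g t) P)
    (hgsqint : ∀ t, Integrable (fun ω => ‖g t ω‖^2) P)
    (hunbiased : ∀ t,
      MeasureTheory.condExp
          (⨆ i ∈ Finset.range t, MeasurableSpace.comap (g i) inferInstance) P (g t)
        =ᵐ[P] fun ω => f' (x t ω))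
    (hvar : ∀ t, ∀ᵐ ω ∂P,
      MeasureTheory.condExp
          (⨆ i ∈ Finset.range t, MeasurableSpace.comap (g i) inferInstance) P
          (fun ω' => ‖g t ω' - f' (x t ω')‖^2) ω ≤ σ^2)
    (hfint : ∀ t, Integrable (fun ω => f (x t ω)) P)
    (hsqint : ∀ t, Integrable (fun ω => ‖x t ω - xstar‖^2) P) :
    (1/(T : ℝ)) * ∑ t ∈ Finset.Icc 1 T, (∫ ω, f (x t ω) ∂P - f xstar)
      ≤ 2*‖x₀ - xstar‖^2/(3*α*γ*(T:ℝ)) + (4/3)*α*σ^2/γ := by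
  classical
  -- filtration
  set F : ℕ → MeasurableSpace Ω :=
    fun t => ⨆ i ∈ Finset.range t, MeasurableSpace.comap (g i) inferInstance with hF
  have hFle : ∀ t, F t ≤ m0 := by
    intro t
    exact iSup₂_le fun i _ => measurable_iff_comap_le.mp (hgmeas i)
  have hFmono : ∀ t, F t ≤ F (t+1) := by
    intro t
    exact biSup_mono fun i hi => Finset.mem_range.mpr (Nat.lt_succ_of_lt (Finset.mem_range.mp hi))
  have hgF : ∀ t, StronglyMeasurable[F (t+1)] (g t) := by
    intro t
    have h1 : MeasurableSpace.comap (g t) inferInstance ≤ F (t+1) :=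
      le_iSup₂ (f := fun i (_ : i ∈ Finset.range (t+1)) => MeasurableSpace.comap (g i) inferInstance)
        t (Finset.mem_range.mpr (Nat.lt_succ_self t))
    exact (Measurable.mono (measurable_iff_comap_le.mpr le_rfl) h1 le_rfl).stronglyMeasurable
  have hxF : ∀ t, StronglyMeasurable[F t] (x t) := by
    intro t
    induction t with
    | zero => rw [hx0]; exact stronglyMeasurable_const
    | succ t ih =>
      rw [hstep t]
      exact (ih.mono (hFmono t)).sub ((hgF t).const_smul α)
  have hxmeas : ∀ t, AEStronglyMeasurable (x t) P :=
    fun t => ((hxF t).mono (hFle t)).aestronglyMeasurable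
  -- continuity of f, f'
  have hcontf' : Continuous f' := by
    have : LipschitzWith (Real.toNNReal L) f' := by
      apply LipschitzWith.of_dist_le_mul
      intro y z
      rw [dist_eq_norm, dist_eq_norm]
      exact le_trans (hsmooth y z)
        (mul_le_mul_of_nonneg_right (Real.le_coe_toNNReal L) (norm_nonneg _))
    exact this.continuous
  have hf'0 : f' xstar = 0 := grad_min_zero (hgrad xstar) hmin
  have hf'bound : ∀ y, ‖f' y‖ ≤ L * ‖y - xstar‖ := by
    intro y
    have := hsmooth y xstar
    rwa [hf'0, sub_zero] at this
  -- measurability / integrability of derived quantities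
  have hXm : ∀ t, AEStronglyMeasurable (fun ω => x t ω - xstar) P :=
    fun t => (hxmeas t).sub aestronglyMeasurable_const
  have hHm : ∀ t, AEStronglyMeasurable (fun ω => f' (x t ω)) P :=
    fun t => hcontf'.comp_aestronglyMeasurable (hxmeas t)
  have hHsq : ∀ t, Integrable (fun ω => ‖f' (x t ω)‖^2) P := by
    intro t
    refine Integrable.mono' ((hsqint t).const_mul (L^2)) (aesm_norm_sq (hHm t))
      (Filter.Eventually.of_forall fun ω => ?_)
    rw [Real.norm_eq_abs, abs_of_nonneg (sq_nonneg _)]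
    have h1 := hf'bound (x t ω)
    nlinarith [norm_nonneg (f' (x t ω)), norm_nonneg (x t ω - xstar)]
  have hgm : ∀ t, AEStronglyMeasurable (g t) P := fun t => (hgint t).aestronglyMeasurable
  -- quantities
  set D : ℕ → ℝ := fun t => ∫ ω, ‖x t ω - xstar‖^2 ∂P with hD
  set Δ : ℕ → ℝ := fun t => (∫ ω, f (x t ω) ∂P) - f xstar with hΔ
  set G : ℕ → ℝ := fun t => ∫ ω, ‖f' (x t ω)‖^2 ∂P with hG
  clear_value D Δ G
  have hDnn : ∀ t, 0 ≤ D t := fun t => by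
    rw [hD]; exact integral_nonneg fun ω => sq_nonneg _
  have hGnn : ∀ t, 0 ≤ G t := fun t => by
    rw [hG]; exact integral_nonneg fun ω => sq_nonneg _
  have hΔnn : ∀ t, 0 ≤ Δ t := by
    intro t
    have h1 : (f xstar : ℝ) = ∫ _ω, f xstar ∂P := by
      rw [integral_const]; simp
    have h2 : ∫ _ω, f xstar ∂P ≤ ∫ ω, f (x t ω) ∂P :=
      integral_mono (integrable_const _) (hfint t) fun ω => hmin (x t ω)
    simp only [hΔ]
    linarith [h1 ▸ h2]
  -- key expectation identities
  have hIxg : ∀ t, Integrable (fun ω => ⟪x t ω - xstar, g t ω⟫) P :=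
    fun t => integrable_inner_of_sq (hXm t) (hsqint t) (hgm t) (hgsqint t)
  have hIHg : ∀ t, Integrable (fun ω => ⟪f' (x t ω), g t ω⟫) P :=
    fun t => integrable_inner_of_sq (hHm t) (hHsq t) (hgm t) (hgsqint t)
  have hIxH : ∀ t, Integrable (fun ω => ⟪x t ω - xstar, f' (x t ω)⟫) P :=
    fun t => integrable_inner_of_sq (hXm t) (hsqint t) (hHm t) (hHsq t)
  have hIgH : ∀ t, Integrable (fun ω => ‖g t ω - f' (x t ω)‖^2) P :=
    fun t => integrable_norm_sq_sub (hgm t) (hgsqint t) (hHm t) (hHsq t)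
  have F1 : ∀ t, ∫ ω, ⟪x t ω - xstar, g t ω⟫ ∂P = ∫ ω, ⟪x t ω - xstar, f' (x t ω)⟫ ∂P := by
    intro t
    exact ortho_lemma (m := F t) P (hFle t) _ _ _ ((hxF t).sub stronglyMeasurable_const)
      (hsqint t) (hgint t) (hgsqint t) (hHm t) (hHsq t) (hunbiased t)
  have F2 : ∀ t, ∫ ω, ⟪f' (x t ω), g t ω⟫ ∂P = G t := by
    intro t
    have h1 := ortho_lemma (m := F t) P (hFle t) _ _ _
      (hcontf'.comp_stronglyMeasurable (hxF t))
      (hHsq t) (hgint t) (hgsqint t) (hHm t) (hHsq t) (hunbiased t)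
    rw [h1, hG]
    exact integral_congr_ae (Filter.Eventually.of_forall fun ω =>
      real_inner_self_eq_norm_sq _)
  have F3 : ∀ t, ∫ ω, ‖g t ω - f' (x t ω)‖^2 ∂P ≤ σ^2 := by
    intro t
    haveI : IsFiniteMeasure (P.trim (hFle t)) := isFiniteMeasure_trim (hFle t)
    have h1 : ∫ ω, ‖g t ω - f' (x t ω)‖^2 ∂P
        = ∫ ω, (MeasureTheory.condExp (F t) P (fun ω' => ‖g t ω' - f' (x t ω')‖^2)) ω ∂P :=
      (integral_condExp (hFle t)).symm
    rw [h1]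
    have h2 : ∫ ω, (MeasureTheory.condExp (F t) P (fun ω' => ‖g t ω' - f' (x t ω')‖^2)) ω ∂P
        ≤ ∫ _ω, σ^2 ∂P :=
      integral_mono_ae integrable_condExp (integrable_const _) (hvar t)
    rw [integral_const] at h2
    simpa using h2
  have F4 : ∀ t, ∫ ω, ‖g t ω‖^2 ∂P ≤ σ^2 + G t := by
    intro t
    have hpt : ∀ ω, ‖g t ω‖^2 = ‖g t ω - f' (x t ω)‖^2
        + 2*⟪g t ω - f' (x t ω), f' (x t ω)⟫ + ‖f' (x t ω)‖^2 := by
      intro ω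
      have := norm_add_sq_real (g t ω - f' (x t ω)) (f' (x t ω))
      rw [sub_add_cancel] at this
      linarith
    have hIcross : Integrable (fun ω => ⟪g t ω - f' (x t ω), f' (x t ω)⟫) P := by
      have : (fun ω => ⟪g t ω - f' (x t ω), f' (x t ω)⟫)
          = fun ω => ⟪g t ω, f' (x t ω)⟫ - ⟪f' (x t ω), f' (x t ω)⟫ := by
        funext ω; rw [inner_sub_left]
      rw [this]
      refine Integrable.sub (integrable_inner_of_sq (hgm t) (hgsqint t) (hHm t) (hHsq t)) ?_
      have : (fun ω => ⟪f' (x t ω), f' (x t ω)⟫) = fun ω => ‖f' (x t ω)‖^2 := by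
        funext ω; exact real_inner_self_eq_norm_sq _
      rw [this]; exact hHsq t
    have hcross0 : ∫ ω, ⟪g t ω - f' (x t ω), f' (x t ω)⟫ ∂P = 0 := by
      have he : ∀ ω, ⟪g t ω - f' (x t ω), f' (x t ω)⟫
          = ⟪f' (x t ω), g t ω⟫ - ‖f' (x t ω)‖^2 := by
        intro ω
        rw [inner_sub_left, real_inner_self_eq_norm_sq, real_inner_comm]
      simp_rw [he]
      rw [integral_sub (hIHg t) (hHsq t), F2 t, hG]
      simp
    have : ∫ ω, ‖g t ω‖^2 ∂P = (∫ ω, ‖g t ω - f' (x t ω)‖^2 ∂P)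
        + 2*(∫ ω, ⟪g t ω - f' (x t ω), f' (x t ω)⟫ ∂P) + G t := by
      have e1 : ∫ ω, (‖g t ω - f' (x t ω)‖^2 + 2*⟪g t ω - f' (x t ω), f' (x t ω)⟫)
            + ‖f' (x t ω)‖^2 ∂P
          = (∫ ω, ‖g t ω - f' (x t ω)‖^2 + 2*⟪g t ω - f' (x t ω), f' (x t ω)⟫ ∂P)
            + ∫ ω, ‖f' (x t ω)‖^2 ∂P :=
        integral_add (by exact (hIgH t).add (hIcross.const_mul 2)) (hHsq t)
      have e2 : ∫ ω, ‖g t ω - f' (x t ω)‖^2 + 2*⟪g t ω - f' (x t ω), f' (x t ω)⟫ ∂P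
          = (∫ ω, ‖g t ω - f' (x t ω)‖^2 ∂P)
            + ∫ ω, 2*⟪g t ω - f' (x t ω), f' (x t ω)⟫ ∂P :=
        integral_add (hIgH t) (by exact hIcross.const_mul 2)
      simp_rw [hpt]
      rw [e1, e2, integral_const_mul, hG]
    rw [this, hcross0]
    have := F3 t
    linarith
  -- recursion (i)
  have Ri : ∀ t, D (t+1) ≤ D t - 2*α*γ*Δ t + α^2*σ^2 + α^2*G t := by
    intro t
    have hpt : ∀ ω, ‖x (t+1) ω - xstar‖^2
        = ‖x t ω - xstar‖^2 - 2*α*⟪x t ω - xstar, g t ω⟫ + α^2*‖g t ω‖^2 := by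
      intro ω
      have h1 : x (t+1) ω - xstar = (x t ω - xstar) - α • g t ω := by
        rw [hstep t]; exact sub_right_comm _ _ _
      rw [h1, norm_sub_sq_real, real_inner_smul_right, norm_smul]
      rw [mul_pow, Real.norm_eq_abs, sq_abs]
      ring
    have hDq : D (t+1) = D t - 2*α*(∫ ω, ⟪x t ω - xstar, g t ω⟫ ∂P)
        + α^2*(∫ ω, ‖g t ω‖^2 ∂P) := by
      have e1 : ∫ ω, (‖x t ω - xstar‖^2 - 2*α*⟪x t ω - xstar, g t ω⟫) + α^2*‖g t ω‖^2 ∂P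
          = (∫ ω, ‖x t ω - xstar‖^2 - 2*α*⟪x t ω - xstar, g t ω⟫ ∂P)
            + ∫ ω, α^2*‖g t ω‖^2 ∂P :=
        integral_add (by exact (hsqint t).sub ((hIxg t).const_mul (2*α)))
          (by exact (hgsqint t).const_mul (α^2))
      have e2 : ∫ ω, ‖x t ω - xstar‖^2 - 2*α*⟪x t ω - xstar, g t ω⟫ ∂P
          = (∫ ω, ‖x t ω - xstar‖^2 ∂P) - ∫ ω, 2*α*⟪x t ω - xstar, g t ω⟫ ∂P :=
        integral_sub (hsqint t) (by exact (hIxg t).const_mul (2*α))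
      simp only [hD]
      simp_rw [hpt]
      rw [e1, e2, integral_const_mul, integral_const_mul]
    have hq : γ * Δ t ≤ ∫ ω, ⟪x t ω - xstar, f' (x t ω)⟫ ∂P := by
      have hpt2 : ∀ ω, γ * (f (x t ω) - f xstar) ≤ ⟪x t ω - xstar, f' (x t ω)⟫ := by
        intro ω
        have h := hqc (x t ω)
        have h2 : ⟪f' (x t ω), xstar - x t ω⟫ = -⟪x t ω - xstar, f' (x t ω)⟫ := by
          rw [show xstar - x t ω = -(x t ω - xstar) from (neg_sub _ _).symm,
            inner_neg_right, real_inner_comm]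
        have h3 : (1/γ) * ⟪f' (x t ω), xstar - x t ω⟫ ≤ f xstar - f (x t ω) := by linarith
        have h4 := mul_le_mul_of_nonneg_left h3 hγ0.le
        rw [h2] at h4
        have h5 : γ * ((1/γ) * -(⟪x t ω - xstar, f' (x t ω)⟫))
            = -⟪x t ω - xstar, f' (x t ω)⟫ := by
          rw [← mul_assoc, mul_one_div, div_self hγ0.ne', one_mul]
        rw [h5] at h4
        linarith
      have hmono := integral_mono
        (by exact ((hfint t).sub (integrable_const _)).const_mul γ) (hIxH t) hpt2
      have e3 : ∫ ω, γ * (f (x t ω) - f xstar) ∂P = γ * Δ t := by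
        rw [integral_const_mul, integral_sub (hfint t) (integrable_const _), integral_const]
        simp [hΔ]
      rwa [e3] at hmono
    have hF4 := F4 t
    rw [hDq, F1 t]
    have hb1 : 2*α*(γ*Δ t) ≤ 2*α*(∫ ω, ⟪x t ω - xstar, f' (x t ω)⟫ ∂P) :=
      mul_le_mul_of_nonneg_left hq (by positivity)
    have hb2 : α^2*(∫ ω, ‖g t ω‖^2 ∂P) ≤ α^2*(σ^2 + G t) :=
      mul_le_mul_of_nonneg_left hF4 (sq_nonneg α)
    linarith [hb1, hb2]
  -- recursion (ii)
  have Rii : ∀ t, Δ (t+1) ≤ Δ t - α*G t + (L/2*α^2)*(σ^2 + G t) := by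
    intro t
    have hpt : ∀ ω, f (x (t+1) ω)
        ≤ (f (x t ω) - α*⟪f' (x t ω), g t ω⟫) + (L/2*α^2)*‖g t ω‖^2 := by
      intro ω
      have hd := descent_lemma hL.le hgrad hsmooth (x t ω) (x (t+1) ω)
      have h1 : x (t+1) ω - x t ω = -(α • g t ω) := by rw [hstep t]; exact sub_sub_cancel_left _ _
      rw [h1, inner_neg_right, real_inner_smul_right, norm_neg, norm_smul,
        mul_pow, Real.norm_eq_abs, sq_abs] at hd
      linarith [hd]
    have hmono := integral_mono (hfint (t+1))
      (by exact ((hfint t).sub ((hIHg t).const_mul α)).add ((hgsqint t).const_mul (L/2*α^2)))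
      hpt
    have eR : ∫ ω, (f (x t ω) - α*⟪f' (x t ω), g t ω⟫) + (L/2*α^2)*‖g t ω‖^2 ∂P
        = (∫ ω, f (x t ω) ∂P) - α*(G t) + (L/2*α^2)*(∫ ω, ‖g t ω‖^2 ∂P) := by
      rw [integral_add (by exact (hfint t).sub ((hIHg t).const_mul α))
        (by exact (hgsqint t).const_mul (L/2*α^2)),
        integral_sub (hfint t) (by exact (hIHg t).const_mul α),
        integral_const_mul, integral_const_mul, F2 t]
    rw [eR] at hmono
    have hb : (L/2*α^2) * (∫ ω, ‖g t ω‖^2 ∂P) ≤ (L/2*α^2)*(σ^2 + G t) :=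
      mul_le_mul_of_nonneg_left (F4 t) (by positivity)
    simp only [hΔ]
    linarith
  -- combined Lyapunov recursion
  set V : ℕ → ℝ := fun t => D t + (4*α/3)*Δ t with hV
  clear_value V
  have Riii : ∀ t, V (t+1) ≤ V t - 2*α*γ*Δ t + (4/3)*α^2*σ^2 := by
    intro t
    have h1 := Ri t
    have h2' := mul_le_mul_of_nonneg_left (Rii t) (by positivity : (0:ℝ) ≤ 4*α/3)
    simp only [hV]
    have hg1 : 0 ≤ G t := hGnn t
    linarith [h1, h2',
      mul_nonneg (mul_nonneg (sq_nonneg α) hg1) (by linarith : (0:ℝ) ≤ 1 - 2*(L*α)),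
      mul_nonneg (mul_nonneg (sq_nonneg α) (sq_nonneg σ)) (by linarith : (0:ℝ) ≤ 1 - 2*(L*α))]
  -- telescoping
  have htel : ∀ N, V (N+1) + 2*α*γ*(∑ t ∈ Finset.Icc 1 N, Δ t)
      ≤ V 1 + (N:ℝ)*((4/3)*α^2*σ^2) := by
    intro N
    induction N with
    | zero =>
      rw [show Finset.Icc 1 0 = ∅ from Finset.Icc_eq_empty (by omega)]
      simp
    | succ N ih =>
      have h := Riii (N+1)
      rw [Finset.sum_Icc_succ_top (by omega : 1 ≤ N+1)]
      push_cast
      push_cast at ih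
      linarith [ih, h]
  have hV1 : V 1 ≤ V 0 + (4/3)*α^2*σ^2 := by
    have h := Riii 0
    linarith [h, mul_nonneg (mul_nonneg hα.le hγ0.le) (hΔnn 0)]
  have hD0 : D 0 = ‖x₀ - xstar‖^2 := by
    simp only [hD, hx0]
    rw [integral_const]; simp
  have hΔ0 : Δ 0 ≤ L/2*‖x₀ - xstar‖^2 := by
    have hd := descent_lemma hL.le hgrad hsmooth xstar x₀
    rw [hf'0, inner_zero_left] at hd
    have e0 : Δ 0 = f x₀ - f xstar := by
      simp only [hΔ, hx0]
      rw [integral_const]; simp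
    rw [e0]
    linarith [hd]
  have hV0 : V 0 ≤ (4/3)*‖x₀ - xstar‖^2 := by
    simp only [hV]
    rw [hD0]
    have hh1 : (4*α/3)*Δ 0 ≤ (4*α/3)*(L/2*‖x₀ - xstar‖^2) :=
      mul_le_mul_of_nonneg_left hΔ0 (by positivity)
    linarith [hh1, mul_nonneg (by linarith : (0:ℝ) ≤ 1 - 2*(L*α)) (sq_nonneg ‖x₀ - xstar‖)]
  have hVnn : 0 ≤ V (T+1) := by
    simp only [hV]
    exact add_nonneg (hDnn _) (mul_nonneg (by positivity) (hΔnn _))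
  have hT1' : (1:ℝ) ≤ (T:ℝ) := by exact_mod_cast hT1
  have hSb : 2*α*γ*(∑ t ∈ Finset.Icc 1 T, Δ t)
      ≤ (4/3)*‖x₀-xstar‖^2 + 2*(T:ℝ)*((4/3)*α^2*σ^2) := by
    have h := htel T
    linarith [h, hV1, hV0, hVnn,
      mul_nonneg (by linarith : (0:ℝ) ≤ (T:ℝ)-1) (mul_nonneg (sq_nonneg α) (sq_nonneg σ))]
  have hTpos : (0:ℝ) < (T:ℝ) := by linarith
  set B : ℝ := 2*‖x₀ - xstar‖^2/(3*α*γ*(T:ℝ)) + (4/3)*α*σ^2/γ with hB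
  have hBkey : 2*α*γ*((T:ℝ)*B) = (4/3)*‖x₀-xstar‖^2 + 2*(T:ℝ)*((4/3)*α^2*σ^2) := by
    rw [hB]
    field_simp
    ring
  have h2αγ : (0:ℝ) < 2*α*γ := by positivity
  have hle : ∑ t ∈ Finset.Icc 1 T, Δ t ≤ (T:ℝ)*B := by
    have h := hSb
    rw [← hBkey] at h
    exact le_of_mul_le_mul_left h h2αγ
  calc (1/(T:ℝ)) * ∑ t ∈ Finset.Icc 1 T, Δ t ≤ (1/(T:ℝ))*((T:ℝ)*B) :=
        mul_le_mul_of_nonneg_left hle (by positivity)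
    _ = B := by field_simp

set_option maxHeartbeats 1000000 in
theorem sgd_quasar_eps_optimal_complexity :
    ∃ C : ℝ, 0 < C ∧
      ∀ {Ω : Type} [MeasurableSpace Ω] (P : Measure Ω) [IsProbabilityMeasure P]
    {n : ℕ} (f : EuclideanSpace ℝ (Fin n) → ℝ)
    (f' : EuclideanSpace ℝ (Fin n) → EuclideanSpace ℝ (Fin n))
    (xstar x₀ : EuclideanSpace ℝ (Fin n))
    (L γ σ R α ε : ℝ) (T : ℕ)
    (x g : ℕ → Ω → EuclideanSpace ℝ (Fin n))
    (hgrad : ∀ y, HasGradientAt f (f' y) y)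
    (hmin : ∀ y, f xstar ≤ f y)
    (hγ0 : 0 < γ) (hγ1 : γ ≤ 1)
    (hqc : ∀ y, f xstar ≥ f y + (1/γ) * ⟪f' y, xstar - y⟫)
    (hsmooth : ∀ y z, ‖f' y - f' z‖ ≤ L * ‖y - z‖)
    (hR : ‖x₀ - xstar‖ ≤ R)
    (hσ : 0 < σ) (hε : 0 < ε)
    (hT : (T : ℝ) ≥ C * (R^2*σ^2/(γ^2*ε^2) + R^2*L/(γ*ε)))
    (hαdef : α = if (T : ℝ) > R^2*L^2/σ^2 then R/(2*σ*Real.sqrt T) else 1/(2*L))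
    (hx0 : x 0 = fun _ => x₀)
    (hstep : ∀ t, x (t+1) = fun ω => x t ω - α • g t ω)
    (hgmeas : ∀ t, Measurable (g t))
    (hgint : ∀ t, Integrable (g t) P)
    (hgsqint : ∀ t, Integrable (fun ω => ‖g t ω‖^2) P)
    (hunbiased : ∀ t,
      MeasureTheory.condExp
          (⨆ i ∈ Finset.range t, MeasurableSpace.comap (g i) inferInstance) P (g t)
        =ᵐ[P] fun ω => f' (x t ω))
    (hvar : ∀ t, ∀ᵐ ω ∂P,
      MeasureTheory.condExp
          (⨆ i ∈ Finset.range t, MeasurableSpace.comap (g i) inferInstance) P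
          (fun ω' => ‖g t ω' - f' (x t ω')‖^2) ω ≤ σ^2)
    (hfint : ∀ t, Integrable (fun ω => f (x t ω)) P)
    (hsqint : ∀ t, Integrable (fun ω => ‖x t ω - xstar‖^2) P)
,      (1/(T : ℝ)) * ∑ t ∈ Finset.Icc 1 T, (∫ ω, f (x t ω) ∂P - f xstar) ≤ ε := by
  refine ⟨16, by norm_num, ?_⟩
  intro Ω _ P _ n f f' xstar x₀ L γ σ R α ε T x g hgrad hmin hγ0 hγ1 hqc hsmooth hR hσ hε
    hT hαdef hx0 hstep hgmeas hgint hgsqint hunbiased hvar hfint hsqint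
  -- trivial case T = 0
  rcases Nat.eq_zero_or_pos T with hT0 | hTpos
  · subst hT0
    rw [show Finset.Icc 1 0 = ∅ from Finset.Icc_eq_empty (by omega)]
    simpa using hε.le
  have hT1 : 1 ≤ T := hTpos
  have hT1' : (1:ℝ) ≤ (T:ℝ) := by exact_mod_cast hT1
  have hTRpos : (0:ℝ) < (T:ℝ) := by linarith
  -- degenerate case L ≤ 0 : f is constant
  by_cases hL : 0 < L
  swap
  · push_neg at hL
    have hf'0 : f' xstar = 0 := grad_min_zero (hgrad xstar) hmin
    have hf'all : ∀ y, f' y = 0 := by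
      intro y
      have h := hsmooth y xstar
      have h2 : L * ‖y - xstar‖ ≤ 0 := mul_nonpos_of_nonpos_of_nonneg hL (norm_nonneg _)
      have h4 : f' y - f' xstar = 0 :=
        norm_eq_zero.mp (le_antisymm (le_trans h h2) (norm_nonneg _))
      rwa [hf'0, sub_zero] at h4
    have hfc : ∀ y, f y = f xstar := by
      intro y
      have h := hqc y
      rw [hf'all y, inner_zero_left] at h
      have h5 := hmin y
      simp at h
      linarith
    have hzero : ∀ t : ℕ, ∫ ω, f (x t ω) ∂P - f xstar = 0 := by
      intro t
      have he : (fun ω => f (x t ω)) = fun _ : Ω => f xstar := funext fun ω => hfc _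
      rw [he, integral_const]
      simp
    rw [Finset.sum_eq_zero fun t _ => hzero t]
    simpa using hε.le
  -- main case : L > 0
  have hR0 : 0 ≤ R := le_trans (norm_nonneg _) hR
  have hnx : ‖x₀ - xstar‖^2 ≤ R^2 := by nlinarith [norm_nonneg (x₀ - xstar), hR]
  by_cases hcase : (T:ℝ) > R^2*L^2/σ^2
  · -- large noise regime : α = R/(2σ√T)
    rw [if_pos hcase] at hαdef
    by_cases hRz : R = 0
    · -- then x₀ = xstar and α = 0, iterates constant
      have hx₀ : x₀ = xstar := by
        have h1 : ‖x₀ - xstar‖ ≤ 0 := hRz ▸ hR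
        have h2 := le_antisymm h1 (norm_nonneg _)
        rwa [norm_eq_zero, sub_eq_zero] at h2
      have hα0 : α = 0 := by rw [hαdef, hRz]; simp
      have hxt : ∀ t, x t = fun _ => xstar := by
        intro t; induction t with
        | zero => rw [hx0, hx₀]
        | succ t ih =>
          rw [hstep t, ih, hα0]
          funext ω; simp
      have hzero : ∀ t : ℕ, ∫ ω, f (x t ω) ∂P - f xstar = 0 := by
        intro t
        rw [hxt t, integral_const]
        simp
      rw [Finset.sum_eq_zero fun t _ => hzero t]
      simpa using hε.le
    have hRpos : 0 < R := lt_of_le_of_ne hR0 (Ne.symm hRz)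
    have hsT : 0 < Real.sqrt T := Real.sqrt_pos.mpr hTRpos
    have hαpos : 0 < α := by rw [hαdef]; positivity
    have hsge : R*L/σ ≤ Real.sqrt T := by
      have h1 : (R*L/σ)^2 = R^2*L^2/σ^2 := by ring
      have h2 : Real.sqrt ((R*L/σ)^2) ≤ Real.sqrt T :=
        Real.sqrt_le_sqrt (by rw [h1]; exact hcase.le)
      rwa [Real.sqrt_sq (by positivity)] at h2
    have hLα : L*α ≤ 1/2 := by
      rw [hαdef]
      rw [show L*(R/(2*σ*Real.sqrt T)) = (L*R)/(2*(σ*Real.sqrt T)) by ring,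
        div_le_iff₀ (by positivity)]
      have h3 := mul_le_mul_of_nonneg_left hsge hσ.le
      have h4 : σ*(R*L/σ) = R*L := by field_simp
      rw [h4] at h3
      nlinarith [h3]
    have hmaster := sgd_master P f f' xstar x₀ L γ σ α T x g hgrad hmin hγ0 hqc hsmooth
      hσ.le hL hαpos hLα hT1 hx0 hstep hgmeas hgint hgsqint hunbiased hvar hfint hsqint
    refine le_trans hmaster ?_
    have hsq : (Real.sqrt T)^2 = (T:ℝ) := Real.sq_sqrt (by positivity)
    have hsC : 4*R*σ/(γ*ε) ≤ Real.sqrt T := by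
      have h1 : 16*(R^2*σ^2/(γ^2*ε^2)) ≤ (T:ℝ) := by
        have h2 : (0:ℝ) ≤ R^2*L/(γ*ε) := by positivity
        linarith [hT]
      have h3 : (4*R*σ/(γ*ε))^2 ≤ (T:ℝ) := by
        have h4 : (4*R*σ/(γ*ε))^2 = 16*(R^2*σ^2/(γ^2*ε^2)) := by
          field_simp
          ring
        linarith [h4 ▸ h1]
      have h5 := Real.sqrt_le_sqrt h3
      rwa [Real.sqrt_sq (by positivity)] at h5
    calc 2*‖x₀ - xstar‖^2/(3*α*γ*(T:ℝ)) + (4/3)*α*σ^2/γ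
        ≤ 2*R^2/(3*α*γ*(T:ℝ)) + (4/3)*α*σ^2/γ := by gcongr
      _ = 2*R*σ/(γ*Real.sqrt (T:ℝ)) := by
          rw [hαdef]
          generalize ht : Real.sqrt (T:ℝ) = s
          rw [ht] at hsq hsT
          rw [← hsq]
          have hs0 : s ≠ 0 := ne_of_gt hsT
          field_simp
          ring
      _ ≤ ε/2 := by
          rw [div_le_div_iff₀ (by positivity) (by norm_num)]
          have h6 := mul_le_mul_of_nonneg_left hsC (by positivity : (0:ℝ) ≤ γ*ε)
          have h7 : γ*ε*(4*R*σ/(γ*ε)) = 4*R*σ := by field_simp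
          rw [h7] at h6
          nlinarith [h6]
      _ ≤ ε := by linarith
  · -- small noise regime : α = 1/(2L)
    rw [if_neg hcase] at hαdef
    push_neg at hcase
    have hαpos : 0 < α := by rw [hαdef]; positivity
    have hLα : L*α ≤ 1/2 := by
      rw [hαdef]
      have : L*(1/(2*L)) = 1/2 := by field_simp
      linarith [this]
    have hRL : σ^2 ≤ R^2*L^2 := by
      have h1 := mul_le_mul_of_nonneg_right hcase (sq_nonneg σ)
      have h2 : R^2*L^2/σ^2*σ^2 = R^2*L^2 := by field_simp
      rw [h2] at h1
      nlinarith [h1, mul_nonneg (by linarith : (0:ℝ) ≤ (T:ℝ)-1) (sq_nonneg σ)]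
    have hRpos : 0 < R := by
      rcases hR0.lt_or_eq with h | h
      · exact h
      · exfalso
        rw [← h] at hRL
        simp at hRL
        nlinarith [hσ]
    have hR2 : (0:ℝ) < R^2 := by positivity
    have hσ2 : 4*σ^2 ≤ γ*ε*L := by
      have h1 : 16*(R^2*σ^2/(γ^2*ε^2)) ≤ (T:ℝ) := by
        have h2 : (0:ℝ) ≤ R^2*L/(γ*ε) := by positivity
        linarith [hT]
      have h2 : 16*(R^2*σ^2/(γ^2*ε^2)) ≤ R^2*L^2/σ^2 := le_trans h1 hcase
      have h3 : (16*(R^2*σ^2))/(γ^2*ε^2) ≤ R^2*L^2/σ^2 := by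
        rw [show (16*(R^2*σ^2))/(γ^2*ε^2) = 16*(R^2*σ^2/(γ^2*ε^2)) by ring]
        exact h2
      rw [div_le_div_iff₀ (by positivity) (by positivity)] at h3
      have h4 : (4*σ^2)^2 ≤ (γ*ε*L)^2 := by
        have h5 : R^2*((4*σ^2)^2) ≤ R^2*((γ*ε*L)^2) := by nlinarith [h3]
        exact le_of_mul_le_mul_left h5 hR2
      have h6 := Real.sqrt_le_sqrt h4
      rwa [Real.sqrt_sq (by positivity), Real.sqrt_sq (by positivity)] at h6
    have hTlb : 16*(R^2*L/(γ*ε)) ≤ (T:ℝ) := by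
      have h2 : (0:ℝ) ≤ R^2*σ^2/(γ^2*ε^2) := by positivity
      linarith [hT]
    have hmaster := sgd_master P f f' xstar x₀ L γ σ α T x g hgrad hmin hγ0 hqc hsmooth
      hσ.le hL hαpos hLα hT1 hx0 hstep hgmeas hgint hgsqint hunbiased hvar hfint hsqint
    refine le_trans hmaster ?_
    calc 2*‖x₀ - xstar‖^2/(3*α*γ*(T:ℝ)) + (4/3)*α*σ^2/γ
        ≤ 2*R^2/(3*α*γ*(T:ℝ)) + (4/3)*α*σ^2/γ := by gcongr
      _ = 4*L*R^2/(3*γ*(T:ℝ)) + (2/3)*σ^2/(L*γ) := by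
          rw [hαdef]
          field_simp
          ring
      _ ≤ ε/12 + ε/6 := by
          apply add_le_add
          · rw [div_le_div_iff₀ (by positivity) (by norm_num)]
            have h6 := mul_le_mul_of_nonneg_left hTlb (by positivity : (0:ℝ) ≤ γ*ε)
            have h7 : γ*ε*(16*(R^2*L/(γ*ε))) = 16*R^2*L := by field_simp
            rw [h7] at h6
            nlinarith [h6]
          · rw [div_le_div_iff₀ (by positivity) (by norm_num)]
            nlinarith [hσ2]
      _ ≤ ε := by linarith
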